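/- Let f : [0,1] → 2^[0,1] be an upper semicontinuous set-valued function. Then f is almost nonfissile (the set of points (x,y) ∈ G(f) with f(x) a singleton is dense in G(f)) if and only if f is irreducible with respect to domain (no proper closed subset H ⊊ G(f) satisfies π₁[H] = [0,1]). -/

import Mathlib

open Set Filter Topology

/-- The graph of a set-valued function on `[0,1]`. -/
def GraphSV (f : ℝ → Set ℝ) : Set (ℝ × ℝ) :=
  {p | p.1 ∈ Icc (0:ℝ) 1 ∧ p.2 ∈ f p.1}

/-- Upper semicontinuous set-valued function `[0,1] → 2^[0,1]`:
nonempty compact values inside `[0,1]` and closed graph. -/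
def USC (f : ℝ → Set ℝ) : Prop :=
  (∀ x ∈ Icc (0:ℝ) 1, (f x).Nonempty ∧ f x ⊆ Icc (0:ℝ) 1 ∧ IsCompact (f x)) ∧
    IsClosed (GraphSV f)

/-- The intermediate value property. -/
def IVP (f : ℝ → Set ℝ) : Prop :=
  ∀ x₁ ∈ Icc (0:ℝ) 1, ∀ x₂ ∈ Icc (0:ℝ) 1, x₁ ≠ x₂ →
    ∀ y₁ ∈ f x₁, ∀ y₂ ∈ f x₂, y₁ ≠ y₂ →
      ∀ y ∈ Ioo (min y₁ y₂) (max y₁ y₂),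
        ∃ x ∈ Ioo (min x₁ x₂) (max x₁ x₂), y ∈ f x

/-- The weak intermediate value property. -/
def WIVP (f : ℝ → Set ℝ) : Prop :=
  ∀ x₁ ∈ Icc (0:ℝ) 1, ∀ x₂ ∈ Icc (0:ℝ) 1, x₁ ≠ x₂ →
    ∀ y₁ ∈ f x₁, ∃ y₂ ∈ f x₂,
      ∀ y ∈ Icc (min y₁ y₂) (max y₁ y₂),
        ∃ x ∈ Icc (min x₁ x₂) (max x₁ x₂), y ∈ f x

/-- Weak continuity (from the left and the right) at each interior point. -/
def WeakCont (f : ℝ → Set ℝ) : Prop :=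
  ∀ x ∈ Ioo (0:ℝ) 1, ∀ y ∈ f x,
    (∃ u : ℕ → ℝ × ℝ, (∀ k, u k ∈ GraphSV f ∧ (u k).1 < x) ∧
      Tendsto u atTop (𝓝 (x, y))) ∧
    (∃ u : ℕ → ℝ × ℝ, (∀ k, u k ∈ GraphSV f ∧ x < (u k).1) ∧
      Tendsto u atTop (𝓝 (x, y)))

/-- `f` is almost nonfissile: the nonfissile points of the graph are dense in the graph. -/
def AlmostNonfissile (f : ℝ → Set ℝ) : Prop :=
  GraphSV f ⊆ closure {p | p ∈ GraphSV f ∧ f p.1 = {p.2}}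

/-- `f` is light: each fiber `{x : y ∈ f x}` has empty interior in `[0,1]`. -/
def Light (f : ℝ → Set ℝ) : Prop :=
  ∀ y : ℝ, ∀ U : Set ℝ, IsOpen U → (U ∩ Icc (0:ℝ) 1).Nonempty →
    ∃ x ∈ U ∩ Icc (0:ℝ) 1, y ∉ f x

/-- `f` is surjective onto `[0,1]`. -/
def Surj (f : ℝ → Set ℝ) : Prop :=
  ∀ y ∈ Icc (0:ℝ) 1, ∃ x ∈ Icc (0:ℝ) 1, y ∈ f x

/-- The `n`-fold set-valued composition of `f`. -/
def fIter (f : ℝ → Set ℝ) : ℕ → ℝ → Set ℝ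
  | 0, x => {x}
  | n + 1, x => ⋃ z ∈ fIter f n x, f z

/-- The image `f^n[A] = ⋃_{a ∈ A} f^n(a)`. -/
def imIter (f : ℝ → Set ℝ) (n : ℕ) (A : Set ℝ) : Set ℝ :=
  ⋃ a ∈ A, fIter f n a

/-- The inverse limit of the single bonding function `f` on `[0,1]`. -/
def InvLim (f : ℝ → Set ℝ) : Set (ℕ → ℝ) :=
  {z | (∀ i, z i ∈ Icc (0:ℝ) 1) ∧ ∀ i, z i ∈ f (z (i + 1))}

/-- `X` is irreducible between `x` and `y`: the only subcontinuum of `X`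
containing both is `X` itself. -/
def IrreducibleBetween (X : Set (ℕ → ℝ)) (x y : ℕ → ℝ) : Prop :=
  x ∈ X ∧ y ∈ X ∧
    ∀ K ⊆ X, IsCompact K → IsConnected K → x ∈ K → y ∈ K → K = X

lemma lemA (f : ℝ → Set ℝ)
    (hval : ∀ x ∈ Icc (0:ℝ) 1, (f x).Nonempty ∧ f x ⊆ Icc (0:ℝ) 1 ∧ IsCompact (f x))
    (hcl : IsClosed (GraphSV f))
    (hirr : ∀ H ⊆ GraphSV f, IsClosed H →
      (∀ x ∈ Icc (0:ℝ) 1, ∃ y, (x, y) ∈ H) → H = GraphSV f)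
    {a b c d : ℝ} (hne : (GraphSV f ∩ Ioo a b ×ˢ Ioo c d).Nonempty) :
    ∃ x ∈ Ioo a b ∩ Icc (0:ℝ) 1, f x ⊆ Ioo c d := by
  have hH : ¬ (∀ x ∈ Icc (0:ℝ) 1, ∃ y, (x, y) ∈ GraphSV f \ Ioo a b ×ˢ Ioo c d) := by
    intro hfull
    have heq := hirr _ diff_subset (hcl.sdiff (isOpen_Ioo.prod isOpen_Ioo)) hfull
    obtain ⟨p, hpG, hpB⟩ := hne
    rw [← heq] at hpG
    exact hpG.2 hpB
  push_neg at hH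
  obtain ⟨x, hxI, hx⟩ := hH
  obtain ⟨y₀, hy₀⟩ := (hval x hxI).1
  have hxy₀ : (x, y₀) ∈ GraphSV f := ⟨hxI, hy₀⟩
  have hbox : (x, y₀) ∈ Ioo a b ×ˢ Ioo c d := by
    by_contra h; exact hx y₀ ⟨hxy₀, h⟩
  refine ⟨x, ⟨hbox.1, hxI⟩, fun y hy => ?_⟩
  by_contra h
  exact hx y ⟨⟨hxI, hy⟩, fun hb => h hb.2⟩

lemma lemB (f : ℝ → Set ℝ)
    (hval : ∀ x ∈ Icc (0:ℝ) 1, (f x).Nonempty ∧ f x ⊆ Icc (0:ℝ) 1 ∧ IsCompact (f x))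
    (hcl : IsClosed (GraphSV f))
    {x₀ c d : ℝ} (hx₀ : x₀ ∈ Icc (0:ℝ) 1) (hsub : f x₀ ⊆ Ioo c d) :
    ∃ δ > 0, ∀ z ∈ Icc (0:ℝ) 1, |z - x₀| ≤ δ → f z ⊆ Ioo c d := by
  by_contra hcon
  push_neg at hcon
  have hseq : ∀ n : ℕ, ∃ z, z ∈ Icc (0:ℝ) 1 ∧ |z - x₀| ≤ 1/((n:ℝ)+1) ∧
      ∃ y ∈ f z, y ∉ Ioo c d := by
    intro n
    obtain ⟨z, hz1, hz2, hz3⟩ := hcon (1/((n:ℝ)+1)) (by positivity)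
    rw [Set.not_subset] at hz3
    exact ⟨z, hz1, hz2, hz3⟩
  choose z hz1 hz2 y hy1 hy2 using hseq
  have hyI : ∀ n, y n ∈ Icc (0:ℝ) 1 ∩ (Ioo c d)ᶜ := fun n =>
    ⟨(hval _ (hz1 n)).2.1 (hy1 n), hy2 n⟩
  have hK : IsCompact (Icc (0:ℝ) 1 ∩ (Ioo c d)ᶜ) :=
    isCompact_Icc.inter_right isOpen_Ioo.isClosed_compl
  obtain ⟨w, hwK, φ, hφ, hwt⟩ := hK.tendsto_subseq hyI
  have h0 : Tendsto (fun n : ℕ => 1/((n:ℝ)+1)) atTop (𝓝 0) :=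
    tendsto_one_div_add_atTop_nhds_zero_nat
  have hzt : Tendsto z atTop (𝓝 x₀) := by
    rw [tendsto_iff_dist_tendsto_zero]
    refine squeeze_zero (fun n => dist_nonneg) (fun n => ?_) h0
    rw [Real.dist_eq]; exact hz2 n
  have hzφ : Tendsto (z ∘ φ) atTop (𝓝 x₀) := hzt.comp hφ.tendsto_atTop
  have hgr : Tendsto (fun n => (z (φ n), y (φ n))) atTop (𝓝 (x₀, w)) :=
    hzφ.prodMk_nhds hwt
  have hmem : (x₀, w) ∈ GraphSV f :=
    hcl.isSeqClosed (fun n => ⟨hz1 (φ n), hy1 (φ n)⟩) hgr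
  exact hwK.2 (hsub hmem.2)

structure AuxSt (f : ℝ → Set ℝ) where
  x : ℝ
  c : ℝ
  d : ℝ
  δ : ℝ
  hx : x ∈ Icc (0:ℝ) 1
  hδ : 0 < δ
  hfib : ∀ z ∈ Icc (0:ℝ) 1, |z - x| ≤ δ → f z ⊆ Ioo c d

lemma step_ex (f : ℝ → Set ℝ)
    (hval : ∀ x ∈ Icc (0:ℝ) 1, (f x).Nonempty ∧ f x ⊆ Icc (0:ℝ) 1 ∧ IsCompact (f x))
    (hcl : IsClosed (GraphSV f))
    (hirr : ∀ H ⊆ GraphSV f, IsClosed H →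
      (∀ x ∈ Icc (0:ℝ) 1, ∃ y, (x, y) ∈ H) → H = GraphSV f)
    (s : AuxSt f) :
    ∃ t : AuxSt f, |t.x - s.x| ≤ s.δ/2 ∧ t.δ ≤ s.δ/2 ∧ s.c ≤ t.c ∧ t.d ≤ s.d ∧
      t.d - t.c ≤ (s.d - s.c)/2 := by
  obtain ⟨y, hy⟩ := (hval s.x s.hx).1
  have hyIoo : y ∈ Ioo s.c s.d := s.hfib s.x s.hx (by simp; exact s.hδ.le) hy
  have hcd : 0 < s.d - s.c := sub_pos.mpr (hyIoo.1.trans hyIoo.2)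
  have hc'y : max s.c (y - (s.d - s.c)/4) < y := max_lt hyIoo.1 (by linarith)
  have hyd' : y < min s.d (y + (s.d - s.c)/4) := lt_min hyIoo.2 (by linarith)
  have hbox : (GraphSV f ∩ Ioo (s.x - s.δ/2) (s.x + s.δ/2) ×ˢ
      Ioo (max s.c (y - (s.d - s.c)/4)) (min s.d (y + (s.d - s.c)/4))).Nonempty :=
    ⟨(s.x, y), ⟨s.hx, hy⟩, ⟨⟨by linarith [s.hδ], by linarith [s.hδ]⟩, hc'y, hyd'⟩⟩
  obtain ⟨x', ⟨hx'Ioo, hx'I⟩, hx'fib⟩ := lemA f hval hcl hirr hbox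
  obtain ⟨δ'', hδ''pos, hδ''⟩ := lemB f hval hcl hx'I hx'fib
  refine ⟨⟨x', max s.c (y - (s.d - s.c)/4), min s.d (y + (s.d - s.c)/4),
      min δ'' (s.δ/2), hx'I, lt_min hδ''pos (by linarith [s.hδ]),
      fun z hz hz2 => hδ'' z hz (hz2.trans (min_le_left _ _))⟩, ?_, ?_, ?_, ?_, ?_⟩
  · exact abs_le.mpr ⟨by linarith [hx'Ioo.1], by linarith [hx'Ioo.2]⟩
  · exact min_le_right _ _
  · exact le_max_left _ _
  · exact min_le_left _ _
  · have h1 : y - (s.d - s.c)/4 ≤ max s.c (y - (s.d - s.c)/4) := le_max_right _ _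
    have h2 : min s.d (y + (s.d - s.c)/4) ≤ y + (s.d - s.c)/4 := min_le_right _ _
    show min s.d (y + (s.d - s.c)/4) - max s.c (y - (s.d - s.c)/4) ≤ (s.d - s.c)/2
    linarith

lemma key (f : ℝ → Set ℝ)
    (hval : ∀ x ∈ Icc (0:ℝ) 1, (f x).Nonempty ∧ f x ⊆ Icc (0:ℝ) 1 ∧ IsCompact (f x))
    (hcl : IsClosed (GraphSV f))
    (hirr : ∀ H ⊆ GraphSV f, IsClosed H →
      (∀ x ∈ Icc (0:ℝ) 1, ∃ y, (x, y) ∈ H) → H = GraphSV f)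
    {x₀ y₀ : ℝ} (hp : (x₀, y₀) ∈ GraphSV f) {ε : ℝ} (hε : 0 < ε) :
    ∃ q ∈ GraphSV f, f q.1 = {q.2} ∧ dist q (x₀, y₀) < ε := by
  have hx₀ : x₀ ∈ Icc (0:ℝ) 1 := hp.1
  have hy₀ : y₀ ∈ f x₀ := hp.2
  have hbox0 : (GraphSV f ∩ Ioo (x₀ - ε/2) (x₀ + ε/2) ×ˢ
      Ioo (y₀ - ε/2) (y₀ + ε/2)).Nonempty :=
    ⟨(x₀, y₀), ⟨hx₀, hy₀⟩, ⟨⟨by linarith, by linarith⟩, ⟨by linarith, by linarith⟩⟩⟩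
  obtain ⟨x₁, ⟨hx₁Ioo, hx₁I⟩, hx₁fib⟩ := lemA f hval hcl hirr hbox0
  obtain ⟨δ'', hδ''pos, hδ''⟩ := lemB f hval hcl hx₁I hx₁fib
  let s₀ : AuxSt f := ⟨x₁, y₀ - ε/2, y₀ + ε/2, min δ'' (ε/4), hx₁I,
    lt_min hδ''pos (by linarith),
    fun z hz h2 => hδ'' z hz (h2.trans (min_le_left _ _))⟩
  let step : AuxSt f → AuxSt f := fun s => (step_ex f hval hcl hirr s).choose
  let u : ℕ → AuxSt f := fun n => step^[n] s₀
  have hu0 : u 0 = s₀ := rfl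
  have hrel : ∀ n, |(u (n+1)).x - (u n).x| ≤ (u n).δ/2 ∧ (u (n+1)).δ ≤ (u n).δ/2 ∧
      (u n).c ≤ (u (n+1)).c ∧ (u (n+1)).d ≤ (u n).d ∧
      (u (n+1)).d - (u (n+1)).c ≤ ((u n).d - (u n).c)/2 := by
    intro n
    have hsucc : u (n+1) = step (u n) := Function.iterate_succ_apply' step n s₀
    rw [hsucc]
    exact (step_ex f hval hcl hirr (u n)).choose_spec
  -- geometric bounds
  have hδgeo : ∀ n, (u n).δ ≤ (u 0).δ * (1/2)^n := by
    intro n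
    induction n with
    | zero => simp
    | succ n ih =>
      have := (hrel n).2.1
      have h2 : ((1:ℝ)/2)^(n+1) = (1/2)^n * (1/2) := pow_succ _ _
      rw [h2]
      nlinarith [(u n).hδ, (u 0).hδ]
  have hwgeo : ∀ n, (u n).d - (u n).c ≤ ((u 0).d - (u 0).c) * (1/2)^n := by
    intro n
    induction n with
    | zero => simp
    | succ n ih =>
      have := (hrel n).2.2.2.2
      have h2 : ((1:ℝ)/2)^(n+1) = (1/2)^n * (1/2) := pow_succ _ _
      rw [h2]
      nlinarith
  have hcau : CauchySeq (fun n => (u n).x) := by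
    apply cauchySeq_of_le_geometric (1/2) ((u 0).δ) (by norm_num)
    intro n
    rw [Real.dist_eq, abs_sub_comm]
    have h := (hrel n).1
    have h2 := hδgeo n
    have h3 := (u n).hδ
    linarith
  obtain ⟨xs, hxlim⟩ := cauchySeq_tendsto_of_complete hcau
  have hfar : ∀ n m, n ≤ m → |(u m).x - (u n).x| ≤ (u n).δ - (u m).δ := by
    intro n m hnm
    induction m, hnm using Nat.le_induction with
    | base => simp
    | succ m hnm ih =>
      have h1 := (hrel m).1
      have h2 := (hrel m).2.1
      calc |(u (m+1)).x - (u n).x|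
          ≤ |(u (m+1)).x - (u m).x| + |(u m).x - (u n).x| := abs_sub_le _ _ _
        _ ≤ (u m).δ/2 + ((u n).δ - (u m).δ) := add_le_add h1 ih
        _ ≤ (u n).δ - (u (m+1)).δ := by linarith
  have hclose : ∀ n, |xs - (u n).x| ≤ (u n).δ := by
    intro n
    have hlim2 : Tendsto (fun m => |(u m).x - (u n).x|) atTop (𝓝 |xs - (u n).x|) :=
      ((hxlim.sub_const _).abs)
    refine le_of_tendsto hlim2 ?_
    filter_upwards [eventually_ge_atTop n] with m hm
    have h1 := hfar n m hm
    have h2 := (u m).hδ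
    linarith
  have hxsI : xs ∈ Icc (0:ℝ) 1 :=
    isClosed_Icc.mem_of_tendsto hxlim (Eventually.of_forall fun n => (u n).hx)
  have hfz : ∀ n, f xs ⊆ Ioo (u n).c (u n).d :=
    fun n => (u n).hfib xs hxsI (hclose n)
  obtain ⟨z, hz⟩ := (hval xs hxsI).1
  have hsing : ∀ w ∈ f xs, w = z := by
    intro w hw
    have hb : ∀ n, |w - z| ≤ ((u 0).d - (u 0).c) * (1/2)^n := by
      intro n
      have h1 := hfz n hw
      have h2 := hfz n hz
      have h3 := hwgeo n
      exact abs_le.mpr ⟨by linarith [h1.1, h1.2, h2.1, h2.2],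
        by linarith [h1.1, h1.2, h2.1, h2.2]⟩
    have hlim0 : Tendsto (fun n : ℕ => ((u 0).d - (u 0).c) * (1/2)^n) atTop (𝓝 0) := by
      have := (tendsto_pow_atTop_nhds_zero_of_lt_one (by norm_num : (0:ℝ) ≤ 1/2)
        (by norm_num : (1:ℝ)/2 < 1)).const_mul ((u 0).d - (u 0).c)
      simpa using this
    have hle : |w - z| ≤ 0 := ge_of_tendsto hlim0 (Eventually.of_forall hb)
    have := abs_nonneg (w - z)
    have : |w - z| = 0 := le_antisymm hle this
    have := abs_eq_zero.mp this
    linarith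
  refine ⟨(xs, z), ⟨hxsI, hz⟩, eq_singleton_iff_unique_mem.mpr ⟨hz, hsing⟩, ?_⟩
  have h1 : |xs - (u 0).x| ≤ (u 0).δ := hclose 0
  have h1' : (u 0).δ ≤ ε/4 := min_le_right _ _
  have h3 := hfz 0 hz
  have hz1 : y₀ - ε/2 < z := h3.1
  have hz2 : z < y₀ + ε/2 := h3.2
  have hxx : (u 0).x = x₁ := rfl
  rw [hxx] at h1
  rw [Prod.dist_eq]
  apply max_lt
  · rw [Real.dist_eq]
    have habs : |xs - x₀| ≤ |xs - x₁| + |x₁ - x₀| := abs_sub_le _ _ _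
    have h4 : |x₁ - x₀| < ε/2 := abs_sub_lt_iff.mpr ⟨by linarith [hx₁Ioo.2], by linarith [hx₁Ioo.1]⟩
    calc |xs - x₀| ≤ |xs - x₁| + |x₁ - x₀| := habs
      _ < ε/4 + ε/2 := by linarith
      _ < ε := by linarith
  · rw [Real.dist_eq]
    exact abs_sub_lt_iff.mpr ⟨by linarith, by linarith⟩

/-- `f` is almost nonfissile iff it is irreducible with respect to domain. -/
theorem stmt3 (f : ℝ → Set ℝ) (hf : USC f) :
    AlmostNonfissile f ↔
      (∀ H ⊆ GraphSV f, IsClosed H →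
        (∀ x ∈ Icc (0:ℝ) 1, ∃ y, (x, y) ∈ H) → H = GraphSV f) := by
  obtain ⟨hval, hcl⟩ := hf
  constructor
  · intro hAN H hHsub hHcl hHfull
    refine Subset.antisymm hHsub ?_
    have hNH : {p : ℝ × ℝ | p ∈ GraphSV f ∧ f p.1 = {p.2}} ⊆ H := by
      rintro ⟨x, y⟩ ⟨hpG, hps⟩
      obtain ⟨y', hy'⟩ := hHfull x hpG.1
      have hmem : y' ∈ f x := (hHsub hy').2
      rw [hps, mem_singleton_iff] at hmem
      subst hmem
      exact hy'
    calc GraphSV f ⊆ closure {p : ℝ × ℝ | p ∈ GraphSV f ∧ f p.1 = {p.2}} := hAN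
      _ ⊆ closure H := closure_mono hNH
      _ = H := hHcl.closure_eq
  · intro hirr
    intro p hp
    rw [Metric.mem_closure_iff]
    intro ε hε
    obtain ⟨q, hqG, hqs, hqd⟩ := key f hval hcl hirr (x₀ := p.1) (y₀ := p.2) hp hε
    exact ⟨q, ⟨hqG, hqs⟩, by rwa [dist_comm]⟩
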